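/- Let γ ∈ ℝ and fₙ(x,y) := φₙ(y) for n ≥ 1. Then fₙ is a normalized eigenfunction of T = γT₁ + T₂ with eigenvalue γ + (2/3)ⁿ, that is, T fₙ = (γ + (2/3)ⁿ) fₙ in L²([0,1]², Lebesgue). -/

import Mathlib

open MeasureTheory Filter Topology Metric

noncomputable section

namespace EfimovExample

/-- `pₙ = 1 - 2⁻ⁿ` (so `p₀ = 0`, `p₁ = 1/2`, ...). -/
def p (n : ℕ) : ℝ := 1 - (1 / 2 : ℝ) ^ n

/-- `qₙ = (p_{n-1} + pₙ)/2`, the midpoint of `[p_{n-1}, pₙ]`. -/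
def q (n : ℕ) : ℝ := (p (n - 1) + p n) / 2

/-- `ξₙ(y) = π (y - p_{n-1})/(pₙ - p_{n-1})` on `[p_{n-1}, pₙ]` and `0` elsewhere. -/
def ξ (n : ℕ) (y : ℝ) : ℝ :=
  if y ∈ Set.Icc (p (n - 1)) (p n) then
    Real.pi * (y - p (n - 1)) / (p n - p (n - 1))
  else 0

/-- `φₙ(y) = 2^{(n+1)/2} sin (ξₙ(y))`. -/
def φ (n : ℕ) (y : ℝ) : ℝ := 2 ^ ((n + 1 : ℝ) / 2) * Real.sin (ξ n y)

/-- The kernel `k₂(y,t) = Σ_{n ≥ 1} (2/3)ⁿ φₙ(y) φₙ(t)`. -/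
def k₂ (y t : ℝ) : ℝ := ∑' n : ℕ, (2 / 3 : ℝ) ^ (n + 1) * φ (n + 1) y * φ (n + 1) t

/-- The tent function `rₙ`, supported on `[p_{n-1}, pₙ]` with peak `1` at `qₙ`. -/
def r (n : ℕ) (x : ℝ) : ℝ :=
  if x ∈ Set.Icc (p (n - 1)) (q n) then (x - p (n - 1)) / (q n - p (n - 1))
  else if x ∈ Set.Icc (q n) (p n) then (p n - x) / (p n - q n)
  else 0

/-- `u(x) = 0` on `[0, 1/2]`, and `u(x) = Σ_{n ≥ 1} δₙ rₙ(x)` for `x > 1/2`. -/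
def u (δ : ℕ → ℝ) (x : ℝ) : ℝ :=
  if x ≤ 1 / 2 then 0 else ∑' n : ℕ, δ (n + 1) * r (n + 1) x

/-- Lebesgue measure on `[0,1]`. -/
def μI : Measure ℝ := volume.restrict (Set.Icc 0 1)

/-- Lebesgue measure on `[0,1]²`. -/
def μI2 : Measure (ℝ × ℝ) := μI.prod μI

open Real

lemma p_mono : StrictMono p := by
  intro m n h
  have := pow_lt_pow_right_of_lt_one₀ (a := (1/2:ℝ)) (by norm_num) (by norm_num) h
  simp only [p]; linarith

lemma p_nonneg (n : ℕ) : 0 ≤ p n := by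
  have : (1/2:ℝ)^n ≤ 1 := pow_le_one₀ (by norm_num) (by norm_num)
  simp only [p]; linarith

lemma p_le_one (n : ℕ) : p n ≤ 1 := by
  have : (0:ℝ) ≤ (1/2:ℝ)^n := by positivity
  simp only [p]; linarith

lemma psub {n : ℕ} (hn : 1 ≤ n) : p n - p (n - 1) = (1/2:ℝ)^n := by
  obtain ⟨k, rfl⟩ : ∃ k, n = k + 1 := ⟨n - 1, by omega⟩
  simp only [p, Nat.add_sub_cancel, pow_succ]
  ring

lemma phi_zero_of_not_mem {n : ℕ} {t : ℝ} (h : t ∉ Set.Icc (p (n-1)) (p n)) : φ n t = 0 := by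
  simp [φ, ξ, h]

lemma phi_left (n : ℕ) : φ n (p (n-1)) = 0 := by
  have hmem : p (n-1) ∈ Set.Icc (p (n-1)) (p n) :=
    ⟨le_refl _, p_mono.monotone (Nat.sub_le n 1)⟩
  simp [φ, ξ, hmem]

lemma phi_mul_aux {m n : ℕ} (hm : 1 ≤ m) (h : m < n) (t : ℝ) : φ m t * φ n t = 0 := by
  by_cases h1 : t ∈ Set.Icc (p (m-1)) (p m)
  · by_cases h2 : t ∈ Set.Icc (p (n-1)) (p n)
    · have hle : p m ≤ p (n-1) := p_mono.monotone (by omega)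
      have ht : t = p (n-1) := le_antisymm (h1.2.trans hle) h2.1
      rw [ht, phi_left, mul_zero]
    · rw [phi_zero_of_not_mem h2, mul_zero]
  · rw [phi_zero_of_not_mem h1, zero_mul]

lemma phi_mul_eq_zero {m n : ℕ} (hm : 1 ≤ m) (hn : 1 ≤ n) (hmn : m ≠ n) (t : ℝ) :
    φ m t * φ n t = 0 := by
  rcases hmn.lt_or_gt with h | h
  · exact phi_mul_aux hm h t
  · rw [mul_comm]; exact phi_mul_aux hn h t

lemma measurable_phi (n : ℕ) : Measurable (φ n) := by
  have h : Measurable (ξ n) := by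
    apply Measurable.ite measurableSet_Icc _ measurable_const
    fun_prop
  unfold φ
  exact (Real.measurable_sin.comp h).const_mul _

instance : IsFiniteMeasure μI := by
  constructor
  rw [μI, Measure.restrict_apply_univ]
  simp [Real.volume_Icc]

instance : IsFiniteMeasure μI2 := by
  unfold μI2; infer_instance

lemma μI_univ : μI Set.univ = 1 := by
  rw [μI, Measure.restrict_apply_univ]
  simp [Real.volume_Icc]

lemma integral_phi_sq {n : ℕ} (hn : 1 ≤ n) : ∫ t, φ n t ^ 2 ∂μI = 1 := by
  have hd : p n - p (n-1) = (1/2:ℝ)^n := psub hn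
  set a := p (n-1) with ha
  set b := p n with hb
  have hab : a < b := by rw [← sub_pos, hd]; positivity
  have hsub : Set.Icc a b ⊆ Set.Icc 0 1 := Set.Icc_subset_Icc (p_nonneg _) (p_le_one _)
  set c := π / (b - a) with hc
  have hbapos : 0 < b - a := by linarith
  have hcpos : 0 < c := div_pos pi_pos hbapos
  have h1 : ∫ t, φ n t ^ 2 ∂μI = ∫ t in Set.Icc a b, φ n t ^ 2 := by
    rw [μI]
    have e1 : ∫ t in Set.Icc 0 1, φ n t ^ 2
        = ∫ t in Set.Icc 0 1, (Set.Icc a b).indicator (fun t => φ n t ^ 2) t := by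
      apply integral_congr_ae
      apply ae_of_all
      intro t
      by_cases h : t ∈ Set.Icc a b
      · simp [h]
      · simp [Set.indicator_of_notMem h, phi_zero_of_not_mem h]
    rw [e1, setIntegral_indicator measurableSet_Icc,
      Set.inter_eq_self_of_subset_right hsub]
  have h2 : ∫ t in Set.Icc a b, φ n t ^ 2 = ∫ t in a..b, φ n t ^ 2 := by
    rw [intervalIntegral.integral_of_le hab.le, integral_Icc_eq_integral_Ioc]
  have h3 : ∫ t in a..b, φ n t ^ 2
      = ∫ t in a..b, (2:ℝ) ^ ((n:ℝ) + 1) * Real.sin (c * (t - a)) ^ 2 := by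
    apply intervalIntegral.integral_congr
    intro t ht
    rw [Set.uIcc_of_le hab.le] at ht
    have harg : ξ n t = c * (t - a) := by
      have ht' : t ∈ Set.Icc (p (n-1)) (p n) := ht
      simp only [ξ, if_pos ht', hc]
      rw [← ha, ← hb]
      field_simp
    have hpow : ((2:ℝ) ^ ((n + 1 : ℝ) / 2)) ^ 2 = 2 ^ ((n:ℝ) + 1) := by
      rw [← Real.rpow_natCast ((2:ℝ) ^ ((n + 1 : ℝ) / 2)) 2, ← Real.rpow_mul (by norm_num)]
      norm_num
    simp only [φ, harg, mul_pow, hpow]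
  have h4 : ∫ t in a..b, Real.sin (c * (t - a)) ^ 2 = (b - a) / 2 := by
    rw [intervalIntegral.integral_comp_sub_right (fun u => Real.sin (c * u) ^ 2) a]
    rw [intervalIntegral.integral_comp_mul_left (fun u => Real.sin u ^ 2) hcpos.ne']
    have hπ : c * (b - a) = π := by rw [hc]; field_simp
    rw [sub_self, mul_zero, hπ, integral_sin_sq]
    simp only [Real.sin_zero, Real.sin_pi, Real.cos_zero, Real.cos_pi, smul_eq_mul]
    rw [hc]
    rw [show (0 * 1 - 0 * -1 + π - 0) / 2 = π / 2 by ring]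
    field_simp
  rw [h1, h2, h3, intervalIntegral.integral_const_mul, h4, hd]
  have key : (2:ℝ)^n * (1/2:ℝ)^n = 1 := by rw [← mul_pow]; norm_num
  have h5 : (2:ℝ) ^ ((n:ℝ) + 1) = 2 * 2^n := by
    rw [show ((n:ℝ) + 1) = ((n + 1 : ℕ) : ℝ) by push_cast; ring, Real.rpow_natCast, pow_succ]
    ring
  rw [h5]
  nlinarith [key]

lemma int_k2_phi {n : ℕ} (hn : 1 ≤ n) (y : ℝ) :
    ∫ t, k₂ y t * φ n t ∂μI = (2/3:ℝ)^n * φ n y := by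
  have hpt : ∀ t, k₂ y t * φ n t = ((2/3:ℝ)^n * φ n y) * φ n t ^ 2 := by
    intro t
    unfold k₂
    rw [← tsum_mul_right, tsum_eq_single (n-1)]
    · have h : n - 1 + 1 = n := Nat.succ_pred_eq_of_pos hn
      rw [h]; ring
    · intro m hm
      have hz : φ (m+1) t * φ n t = 0 :=
        phi_mul_eq_zero (Nat.le_add_left 1 m) hn (by omega) t
      calc (2/3:ℝ)^(m+1) * φ (m+1) y * φ (m+1) t * φ n t
          = (2/3:ℝ)^(m+1) * φ (m+1) y * (φ (m+1) t * φ n t) := by ring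
        _ = 0 := by rw [hz, mul_zero]
  simp only [hpt]
  rw [integral_const_mul, integral_phi_sq hn, mul_one]

lemma integral_comp_snd {g : ℝ → ℝ} (hg : Measurable g) :
    ∫ xy, g xy.2 ∂μI2 = ∫ y, g y ∂μI := by
  have hmap : Measure.map Prod.snd (μI.prod μI) = μI := by
    rw [Measure.map_snd_prod, μI_univ, one_smul]
  have hgm : AEStronglyMeasurable g (Measure.map Prod.snd (μI.prod μI)) := by
    rw [hmap]; exact hg.aestronglyMeasurable
  rw [show μI2 = μI.prod μI from rfl,
    ← integral_map measurable_snd.aemeasurable hgm, hmap]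

/-- For every `γ ∈ ℝ` and `n ≥ 1`, the function `fₙ(x,y) = φₙ(y)` is a normalized
eigenfunction of `T = γT₁ + T₂` with eigenvalue `γ + (2/3)ⁿ`. -/
theorem eigenfunctions_of_T
    (T₁ T₂ : Lp ℂ 2 μI2 →L[ℂ] Lp ℂ 2 μI2)
    (hT₁ : ∀ f : Lp ℂ 2 μI2,
      (T₁ f : ℝ × ℝ → ℂ) =ᵐ[μI2] fun xy => ∫ s, f (s, xy.2) ∂μI)
    (hT₂ : ∀ f : Lp ℂ 2 μI2,
      (T₂ f : ℝ × ℝ → ℂ) =ᵐ[μI2] fun xy => ∫ t, (k₂ xy.2 t : ℂ) * f (xy.1, t) ∂μI)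
    (γ : ℝ) :
    ∀ n : ℕ, 1 ≤ n →
      MemLp (fun xy : ℝ × ℝ => (φ n xy.2 : ℂ)) 2 μI2 ∧
      ∀ f : Lp ℂ 2 μI2, (f : ℝ × ℝ → ℂ) =ᵐ[μI2] (fun xy => (φ n xy.2 : ℂ)) →
        ‖f‖ = 1 ∧
        ((γ : ℂ) • T₁ + T₂) f = ((γ + (2 / 3 : ℝ) ^ n : ℝ) : ℂ) • f := by
  intro n hn
  have hφm : Measurable (φ n) := measurable_phi n
  have hgm : AEStronglyMeasurable (fun xy : ℝ × ℝ => (φ n xy.2 : ℂ)) μI2 :=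
    (Complex.measurable_ofReal.comp (hφm.comp measurable_snd)).aestronglyMeasurable
  have hbd : ∀ᵐ xy ∂μI2, ‖(φ n xy.2 : ℂ)‖ ≤ 2 ^ ((n + 1 : ℝ) / 2) := by
    apply ae_of_all
    intro xy
    rw [Complex.norm_real, Real.norm_eq_abs, φ, abs_mul,
      abs_of_pos (Real.rpow_pos_of_pos two_pos _)]
    have h1 : |Real.sin (ξ n xy.2)| ≤ 1 :=
      abs_le.mpr ⟨Real.neg_one_le_sin _, Real.sin_le_one _⟩
    have h2 : (0:ℝ) < 2 ^ ((n + 1 : ℝ) / 2) := Real.rpow_pos_of_pos two_pos _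
    nlinarith [abs_nonneg (Real.sin (ξ n xy.2))]
  have hmem : MemLp (fun xy : ℝ × ℝ => (φ n xy.2 : ℂ)) 2 μI2 :=
    MemLp.of_bound hgm _ hbd
  refine ⟨hmem, fun f hf => ?_⟩
  constructor
  · -- norm
    rw [Lp.norm_def, eLpNorm_congr_ae hf,
      hmem.eLpNorm_eq_integral_rpow_norm (by norm_num) (by norm_num)]
    have hint : ∫ xy, ‖(φ n xy.2 : ℂ)‖ ^ (2 : ENNReal).toReal ∂μI2 = 1 := by
      have e : (fun xy : ℝ × ℝ => ‖(φ n xy.2 : ℂ)‖ ^ (2 : ENNReal).toReal)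
          = fun xy : ℝ × ℝ => (fun y => φ n y ^ 2) xy.2 := by
        funext xy
        rw [Complex.norm_real, Real.norm_eq_abs]
        rw [show ((2 : ENNReal).toReal) = ((2:ℕ):ℝ) by norm_num, Real.rpow_natCast, sq_abs]
      rw [e, integral_comp_snd (hφm.pow_const 2), integral_phi_sq hn]
    rw [hint]
    norm_num
  · -- eigenfunction equation
    have hswap : (fun z : ℝ × ℝ => f (z.2, z.1)) =ᵐ[μI2] fun z => (φ n z.1 : ℂ) := by
      have hqp : Measure.QuasiMeasurePreserving (Prod.swap : ℝ × ℝ → ℝ × ℝ) μI2 μI2 :=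
        (Measure.measurePreserving_swap (μ := μI) (ν := μI)).quasiMeasurePreserving
      exact hf.comp_tendsto hqp.tendsto_ae
    have hae1 : ∀ᵐ y ∂μI, ∀ᵐ s ∂μI, f (s, y) = (φ n y : ℂ) :=
      Measure.ae_ae_of_ae_prod hswap
    have hT1g : (T₁ f : ℝ × ℝ → ℂ) =ᵐ[μI2] fun xy => (φ n xy.2 : ℂ) := by
      refine (hT₁ f).trans ?_
      have h2 : ∀ᵐ y ∂μI, ∫ s, f (s, y) ∂μI = (φ n y : ℂ) := by
        filter_upwards [hae1] with y hy
        rw [integral_congr_ae hy, integral_const, measureReal_def, μI_univ]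
        simp
      exact (Measure.quasiMeasurePreserving_snd (μ := μI) (ν := μI)).tendsto_ae.eventually h2
    have hT2g : (T₂ f : ℝ × ℝ → ℂ)
        =ᵐ[μI2] fun xy => (((2/3:ℝ)^n : ℝ) : ℂ) * (φ n xy.2 : ℂ) := by
      refine (hT₂ f).trans ?_
      have hae2 : ∀ᵐ x ∂μI, ∀ᵐ t ∂μI, f (x, t) = (φ n t : ℂ) :=
        Measure.ae_ae_of_ae_prod hf
      have h5 : ∀ᵐ xy ∂μI2, ∀ᵐ t ∂μI, f (xy.1, t) = (φ n t : ℂ) :=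
        (Measure.quasiMeasurePreserving_fst (μ := μI) (ν := μI)).tendsto_ae.eventually hae2
      filter_upwards [h5] with xy hxy
      have e1 : ∫ t, (k₂ xy.2 t : ℂ) * f (xy.1, t) ∂μI
          = ∫ t, ((k₂ xy.2 t * φ n t : ℝ) : ℂ) ∂μI := by
        apply integral_congr_ae
        filter_upwards [hxy] with t ht
        rw [ht]
        push_cast
        ring
      have e2 : ∫ t, ((k₂ xy.2 t * φ n t : ℝ) : ℂ) ∂μI
          = ((∫ t, k₂ xy.2 t * φ n t ∂μI : ℝ) : ℂ) :=
        integral_ofReal (𝕜 := ℂ) (f := fun t => k₂ xy.2 t * φ n t)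
      rw [e1, e2, int_k2_phi hn xy.2]
      push_cast
      ring
    apply Lp.ext
    have e2 : (((γ : ℂ) • T₁ + T₂) f) = (γ : ℂ) • (T₁ f) + T₂ f := rfl
    rw [e2]
    filter_upwards [Lp.coeFn_add ((γ : ℂ) • T₁ f) (T₂ f),
      Lp.coeFn_smul (γ : ℂ) (T₁ f), hT1g, hT2g,
      Lp.coeFn_smul ((γ + (2/3:ℝ)^n : ℝ) : ℂ) f, hf] with xy h1 h2 h3 h4 h5 h6
    rw [h1, h5]
    simp only [Pi.add_apply, Pi.smul_apply, smul_eq_mul] at *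
    rw [h2, h3, h4, h6]
    push_cast
    ring


end EfimovExample

end
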